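/- Let p be an odd prime, L = F_{p^m}, σ = p^s with 0 < s < m, and d = gcd(s,m). Each of the following products, whenever it additionally satisfies the polynomial condition that x^{σ+1} + (1 − 1/N)x + (1/n − 1)/N has no root x ∈ L (for its parameters n, N), is a presemifield isotopic to a commutative presemifield: (1) B(p,m,s, n^{−(σ−1)/2}, n, n^{(σ−1)/2}) with n ∈ L a non-square and m/d or s/d even; (2) B(p,m,s, −n^{−(σ−1)/2}, n, −n^{(σ−1)/2}) with n ∈ L a non-square and s/d odd; (3) B(p,m,s, 1, v², v^{σ−1}) with 0 ≠ v ∈ L and m/d odd; (4) B(p,m,s, 1, n, n^{σ−1}) with 0 ≠ n ∈ L and m/d odd. -/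

import Mathlib

/-- The first coordinate of the product `X(p,m,s,v,l,n,N)`; `B(p,m,s,l,n,N)` is the
case `v = 1`. -/
def Xh {L : Type*} [Field L] (σ : ℕ) (l n N v a b c d : L) : L :=
  (a * c ^ σ - n * N * b * d ^ σ) + l * (a ^ σ * c - n * N * b ^ σ * d)
    + n * v * ((N * a * d ^ σ - b * c ^ σ) + l * (a ^ σ * d - N * b ^ σ * c))

/-- The product `X(p,m,s,v,l,n,N)` on `L × L`. -/
def Xmul {L : Type*} [Field L] (σ : ℕ) (l n N v : L) (x y : L × L) : L × L :=
  (Xh σ l n N v x.1 x.2 y.1 y.2, x.1 * y.2 + x.2 * y.1)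

/-- The product has no zero divisors. -/
def NoZeroDivMul {α : Type*} [Zero α] (mul : α → α → α) : Prop :=
  ∀ x y : α, mul x y = 0 → x = 0 ∨ y = 0

/-- `star` is isotopic to a commutative presemifield. -/
def IsotopicToCommutative {α : Type*} [AddCommGroup α] (star : α → α → α) : Prop :=
  ∃ (cdot : α → α → α) (A B C : α ≃+ α),
    (∀ x y z : α, cdot (x + y) z = cdot x z + cdot y z) ∧
    (∀ x y z : α, cdot x (y + z) = cdot x y + cdot x z) ∧
    (∀ x y : α, cdot x y = 0 → x = 0 ∨ y = 0) ∧
    (∀ x y : α, cdot x y = cdot y x) ∧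
    (∀ x y : α, star (A x) (B y) = C (cdot x y))

/-- The polynomial condition `x^(σ+1) + (1 - 1/N) x + (1/n - 1)/N` has no root in `L`. -/
def BpolyCond {L : Type*} [Field L] (σ : ℕ) (n N : L) : Prop :=
  ∀ x : L, x ^ (σ + 1) + (1 - 1 / N) * x + (1 / n - 1) / N ≠ 0



/-! ### Auxiliary lemmas -/

section Aux

lemma geom_mul' {x : ℕ} (hx : 1 ≤ x) (k : ℕ) :
    (x - 1) * (∑ i ∈ Finset.range k, x ^ i) = x ^ k - 1 := by
  induction k with
  | zero => simp
  | succ k ih =>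
    rw [Finset.sum_range_succ, Nat.mul_add, ih, Nat.sub_mul, pow_succ, one_mul,
      mul_comm x (x ^ k)]
    have h1 : 1 ≤ x ^ k := Nat.one_le_pow _ _ hx
    have h2 : x ^ k ≤ x ^ k * x := Nat.le_mul_of_pos_right _ hx
    omega

lemma geom_parity' {x : ℕ} (hx : x % 2 = 1) (k : ℕ) :
    (∑ i ∈ Finset.range k, x ^ i) % 2 = k % 2 := by
  induction k with
  | zero => simp
  | succ k ih =>
    rw [Finset.sum_range_succ]
    have hxk : x ^ k % 2 = 1 := Nat.odd_iff.mp (Odd.pow (Nat.odd_iff.mpr hx))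
    omega

lemma charP_of_card' {L : Type*} [Field L] [Fintype L] {p m : ℕ} (hp : p.Prime) (hm : 0 < m)
    (hcard : Fintype.card L = p ^ m) : CharP L p := by
  have hchar : CharP L (ringChar L) := ringChar.charP L
  have hprime : (ringChar L).Prime := CharP.char_is_prime L (ringChar L)
  haveI := Fact.mk hprime
  obtain ⟨k, hk⟩ := FiniteField.card L (ringChar L)
  have hdvd : p ∣ ringChar L ^ (k : ℕ) := by
    rw [← hk.2, hcard]; exact dvd_pow_self p hm.ne'
  have : p = ringChar L := (Nat.prime_dvd_prime_iff_eq hp hprime).mp (hp.dvd_of_dvd_pow hdvd)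
  rw [this]; exact hchar

/-- The bridge identity `(p^s - 1) * M = (p^m - 1) * T` for the geometric sums. -/
lemma key_nat {p s m : ℕ} (hp : p.Prime) :
    (p ^ s - 1) * (∑ i ∈ Finset.range (m / Nat.gcd s m), (p ^ Nat.gcd s m) ^ i)
      = (p ^ m - 1) * (∑ i ∈ Finset.range (s / Nat.gcd s m), (p ^ Nat.gcd s m) ^ i) := by
  have hds : Nat.gcd s m ∣ s := Nat.gcd_dvd_left s m
  have hdm : Nat.gcd s m ∣ m := Nat.gcd_dvd_right s m
  have hx1 : 1 ≤ p ^ Nat.gcd s m := Nat.one_le_pow _ _ hp.pos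
  have hEs : (p ^ Nat.gcd s m - 1) * (∑ i ∈ Finset.range (s / Nat.gcd s m),
      (p ^ Nat.gcd s m) ^ i) = p ^ s - 1 := by
    rw [geom_mul' hx1, ← pow_mul, Nat.mul_div_cancel' hds]
  have hEm : (p ^ Nat.gcd s m - 1) * (∑ i ∈ Finset.range (m / Nat.gcd s m),
      (p ^ Nat.gcd s m) ^ i) = p ^ m - 1 := by
    rw [geom_mul' hx1, ← pow_mul, Nat.mul_div_cancel' hdm]
  rw [← hEs, ← hEm]; ring

lemma eigen_zero {L : Type*} [Field L] [Fintype L] {p m s : ℕ} (hp : p.Prime)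
    (hcard : Fintype.card L = p ^ m) (l : L)
    (hM : (-l) ^ (∑ i ∈ Finset.range (m / Nat.gcd s m), (p ^ Nat.gcd s m) ^ i) ≠ 1) :
    ∀ e : L, e ^ p ^ s = -l * e → e = 0 := by
  intro e he
  by_contra hne
  apply hM
  set M := ∑ i ∈ Finset.range (m / Nat.gcd s m), (p ^ Nat.gcd s m) ^ i with hMdef
  set T := ∑ i ∈ Finset.range (s / Nat.gcd s m), (p ^ Nat.gcd s m) ^ i with hTdef
  have hkey : (p ^ s - 1) * M = (p ^ m - 1) * T := key_nat hp
  have hps1 : 1 ≤ p ^ s := Nat.one_le_pow _ _ hp.pos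
  have hsplit : p ^ s * M = (p ^ s - 1) * M + M := by
    have h' : (p ^ s - 1) * M + 1 * M = p ^ s * M := by
      rw [← Nat.add_mul]; congr 1; omega
    omega
  have hq1 : e ^ (p ^ m - 1) = 1 := by
    have := FiniteField.pow_card_sub_one_eq_one e hne
    rwa [hcard] at this
  have hcalc : (-l) ^ M * e ^ M = 1 * e ^ M := by
    rw [one_mul]
    calc (-l) ^ M * e ^ M = (-l * e) ^ M := (mul_pow _ _ _).symm
    _ = (e ^ p ^ s) ^ M := by rw [he]
    _ = e ^ (p ^ s * M) := by rw [← pow_mul]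
    _ = e ^ ((p ^ s - 1) * M) * e ^ M := by rw [hsplit, pow_add]
    _ = (e ^ (p ^ m - 1)) ^ T * e ^ M := by rw [hkey, pow_mul]
    _ = e ^ M := by rw [hq1, one_pow, one_mul]
  exact mul_right_cancel₀ (pow_ne_zero _ hne) hcalc

lemma neg_one_ne_one' {L : Type*} [Field L] {p : ℕ} [CharP L p] (hp : p.Prime) (hodd : Odd p) :
    (-1 : L) ≠ 1 := by
  intro h
  have h2 : ((2 : ℕ) : L) = 0 := by push_cast; linear_combination -h
  have hdvd : p ∣ 2 := (CharP.cast_eq_zero_iff L p 2).mp h2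
  have hle : p ≤ 2 := Nat.le_of_dvd (by norm_num) hdvd
  have := hp.two_le
  have hodd' : p % 2 = 1 := Nat.odd_iff.mp hodd
  omega

lemma bpoly_no_wu {L : Type*} [Field L] [Fintype L] {p m s : ℕ} [Fact p.Prime] [CharP L p]
    (hs : 0 < s) (hsm : s < m) (hcard : Fintype.card L = p ^ m)
    (n N : L) (hn : n ≠ 0) (hN : N ≠ 0)
    (hbp : BpolyCond (p ^ s) n N)
    (W u : L) (hu : u ≠ 0)
    (hw : W ^ p ^ s * W + n ^ p ^ s * (N ^ p ^ s - 1) * (W * u ^ p ^ s)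
        + n * N * (1 - n ^ p ^ s) * (u ^ p ^ s * u) = 0) :
    False := by
  have hp : p.Prime := Fact.out
  set E := p ^ (s * (m - 1)) with hEdef
  have hEσ : ∀ x : L, (x ^ E) ^ p ^ s = x := by
    intro x
    rw [← pow_mul]
    have hEq : E * p ^ s = (p ^ m) ^ s := by
      rw [hEdef, ← pow_add, ← pow_mul]
      congr 1
      have hm1 : m = (m - 1) + 1 := (Nat.succ_pred_eq_of_pos (by omega)).symm
      calc s * (m - 1) + s = ((m - 1) + 1) * s := by ring
      _ = m * s := by rw [← hm1]
    rw [hEq, ← hcard]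
    exact FiniteField.pow_card_pow s x
  have hfrobE : ∀ x : L, (x ^ p ^ s) ^ E = x := by
    intro x
    rw [← pow_mul, mul_comm, pow_mul]
    exact hEσ x
  have hE0 : E ≠ 0 := (pow_pos hp.pos _).ne'
  have hkeyW : W * W ^ E + n * (N - 1) * (W ^ E * u) + n ^ E * N ^ E * (1 - n) * (u * u ^ E)
      = 0 := by
    have h0 : (W ^ p ^ s * W + n ^ p ^ s * (N ^ p ^ s - 1) * (W * u ^ p ^ s)
        + n * N * (1 - n ^ p ^ s) * (u ^ p ^ s * u)) ^ E = 0 := by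
      rw [hw]; exact zero_pow hE0
    rw [add_pow_char_pow, add_pow_char_pow] at h0
    simp only [mul_pow] at h0
    rw [sub_pow_char_pow, sub_pow_char_pow, one_pow] at h0
    simp only [← hEdef, hfrobE] at h0
    linear_combination h0
  have hnN : n * N ≠ 0 := mul_ne_zero hn hN
  have hD : u * n * N ≠ 0 := mul_ne_zero (mul_ne_zero hu hn) hN
  have hDE : (u * n * N) ^ E ≠ 0 := pow_ne_zero _ hD
  set x := (W * (u * n * N)⁻¹) ^ E with hxdef
  have hxσ : x ^ p ^ s = W * (u * n * N)⁻¹ := hEσ _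
  have hxe : x = W ^ E * ((u * n * N) ^ E)⁻¹ := by rw [hxdef, mul_pow, inv_pow]
  apply hbp x
  have huE : u ^ E ≠ 0 := pow_ne_zero _ hu
  have hnE : n ^ E ≠ 0 := pow_ne_zero _ hn
  have hNE2 : N ^ E ≠ 0 := pow_ne_zero _ hN
  have hxe' : x = W ^ E * (u ^ E * n ^ E * N ^ E)⁻¹ := by
    rw [hxe]; congr 2; rw [mul_pow, mul_pow]
  have h1 : x * (u ^ E * n ^ E * N ^ E) = W ^ E := by
    rw [hxe']; field_simp
  have h2 : x ^ p ^ s * (u * n * N) = W := by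
    rw [hxσ]; field_simp
  rw [← h1, ← h2] at hkeyW
  have hQ : n * N * (x ^ p ^ s * x) + n * (N - 1) * x + (1 - n) = 0 := by
    apply mul_left_cancel₀ (show u ^ E * n ^ E * N ^ E * u ≠ 0 from
      mul_ne_zero (mul_ne_zero (mul_ne_zero huE hnE) hNE2) hu)
    rw [mul_zero]
    linear_combination hkeyW
  have hfin : (x ^ (p ^ s + 1) + (1 - 1 / N) * x + (1 / n - 1) / N) * (n * N)
      = n * N * (x ^ p ^ s * x) + n * (N - 1) * x + (1 - n) := by
    rw [pow_succ]
    field_simp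
  rw [hQ] at hfin
  exact (mul_eq_zero.mp hfin).resolve_right hnN

lemma core_nzd {L : Type*} [Field L] [Fintype L] {p m s : ℕ} [Fact p.Prime] [CharP L p]
    (hodd : Odd p) (hs : 0 < s) (hsm : s < m) (hcard : Fintype.card L = p ^ m)
    (l n N : L) (hn : n ≠ 0) (hN : N ≠ 0)
    (hbp : BpolyCond (p ^ s) n N)
    (hA : ∀ e : L, e ^ p ^ s = -l * e → e = 0) :
    NoZeroDivMul (Xmul (p ^ s) l n N 1) := by
  have hp : p.Prime := Fact.out
  have hσ0 : p ^ s ≠ 0 := (pow_pos hp.pos _).ne'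
  have hσodd : Odd (p ^ s) := hodd.pow
  have hn1 : n ≠ 1 := by
    intro h
    apply hbp 0
    rw [h]
    simp [zero_pow hσ0]
  rintro ⟨a, b⟩ ⟨c, d⟩ hXY
  have h1 : Xh (p ^ s) l n N 1 a b c d = 0 := by
    have := congrArg Prod.fst hXY; simpa [Xmul] using this
  have h2 : a * d + b * c = 0 := by
    have := congrArg Prod.snd hXY; simpa [Xmul] using this
  unfold Xh at h1
  simp only [Prod.mk_eq_zero]
  by_cases hd : d = 0
  · subst hd
    simp only [zero_pow hσ0] at h1
    by_cases hc : c = 0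
    · right; exact ⟨hc, rfl⟩
    · have hb : b = 0 := by
        rcases mul_eq_zero.mp (by linear_combination h2 : b * c = 0) with h | h
        · exact h
        · exact absurd h hc
      subst hb
      simp only [zero_pow hσ0] at h1
      by_cases ha : a = 0
      · left; exact ⟨ha, rfl⟩
      · exfalso
        have haσ : a ^ p ^ s ≠ 0 := pow_ne_zero _ ha
        have he : (c * a⁻¹) ^ p ^ s = -l * (c * a⁻¹) := by
          rw [mul_pow, inv_pow]
          field_simp
          linear_combination h1
        exact hc (by
          have := hA _ he
          rcases mul_eq_zero.mp this with h | h
          · exact h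
          · exact absurd h (inv_ne_zero ha))
  · have hdσ : d ^ p ^ s ≠ 0 := pow_ne_zero _ hd
    have h2σ : a ^ p ^ s * d ^ p ^ s + b ^ p ^ s * c ^ p ^ s = 0 := by
      have h3 : a * d = -(b * c) := by linear_combination h2
      have h4 := congrArg (· ^ p ^ s) h3
      rw [mul_pow, Odd.neg_pow hσodd, mul_pow] at h4
      linear_combination h4
    have hfact : (c ^ p ^ s * (c + n * d) + n * N * (d ^ p ^ s * (c + d)))
        * (b * d ^ p ^ s + l * (b ^ p ^ s * d)) = 0 := by
      linear_combination (-(d * d ^ p ^ s)) * h1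
        + ((c ^ p ^ s + n * N * d ^ p ^ s) * d ^ p ^ s) * h2
        + (l * ((c + n * d) * d)) * h2σ
    rcases mul_eq_zero.mp hfact with hK | hbd
    · exfalso
      by_cases hcd : c + d = 0
      · have hc : c = -d := by linear_combination hcd
        rw [hc, Odd.neg_pow hσodd] at hK
        have : (n - 1) * (d ^ p ^ s * d) = 0 := by linear_combination -hK
        rcases mul_eq_zero.mp this with h | h
        · exact hn1 (by linear_combination h)
        · exact hd ((mul_eq_zero.mp h).elim (fun hh => absurd hh hdσ) id)
      · have hWσ : ((c + n * d) - n * N * (c + d)) ^ p ^ s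
            = (c ^ p ^ s + n ^ p ^ s * d ^ p ^ s)
              - n ^ p ^ s * N ^ p ^ s * (c ^ p ^ s + d ^ p ^ s) := by
          simp only [sub_pow_char_pow, add_pow_char_pow, mul_pow]
        refine bpoly_no_wu hs hsm hcard n N hn hN hbp
          ((c + n * d) - n * N * (c + d)) (c + d) hcd ?_
        rw [hWσ]
        have huσ : (c + d) ^ p ^ s = c ^ p ^ s + d ^ p ^ s := by
          simp only [add_pow_char_pow]
        rw [huσ]
        linear_combination (1 - n ^ p ^ s) * hK
    · by_cases hb : b = 0
      · subst hb
        have ha : a = 0 := by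
          rcases mul_eq_zero.mp (by linear_combination h2 : a * d = 0) with h | h
          · exact h
          · exact absurd h hd
        left; exact ⟨ha, rfl⟩
      · exfalso
        have hbσ : b ^ p ^ s ≠ 0 := pow_ne_zero _ hb
        have he : (d * b⁻¹) ^ p ^ s = -l * (d * b⁻¹) := by
          rw [mul_pow, inv_pow]
          field_simp
          linear_combination hbd
        exact hd (by
          have := hA _ he
          rcases mul_eq_zero.mp this with h | h
          · exact h
          · exact absurd h (inv_ne_zero hb))

lemma anti_identity {L : Type*} [Field L] (σ : ℕ) (l n N u r a b c d : L)
    (E1 : n * N * u ^ σ = l * n * u)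
    (E2 : r ^ σ = -(l * n * N * u))
    (E3 : l * r = -(n * N * u ^ σ))
    (E4 : n * r ^ σ = l * n * N * r) :
    Xh σ l n N 1 a b (r * d) (u * c) = Xh σ l n N 1 c d (r * b) (u * a) := by
  unfold Xh
  linear_combination (a * c ^ σ - a ^ σ * c) * E1 + (a * d ^ σ - b ^ σ * c) * E2 +
    (a ^ σ * d - b * c ^ σ) * E3 + (b ^ σ * d - b * d ^ σ) * E4

lemma shear_identity {L : Type*} [Field L] {p : ℕ} [Fact p.Prime] [CharP L p]
    (s : ℕ) (n N κ a b c d : L)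
    (hκσ : κ ^ p ^ s = -(2 * (n * N)))
    (hκ : κ = -(2 * n)) :
    Xh (p ^ s) 1 n N 1 a b (c + κ * d) d = Xh (p ^ s) 1 n N 1 c d (a + κ * b) b := by
  have h1 : (c + κ * d) ^ p ^ s = c ^ p ^ s + κ ^ p ^ s * d ^ p ^ s := by
    rw [add_pow_char_pow, mul_pow]
  have h2 : (a + κ * b) ^ p ^ s = a ^ p ^ s + κ ^ p ^ s * b ^ p ^ s := by
    rw [add_pow_char_pow, mul_pow]
  unfold Xh
  rw [h1, h2, hκσ]
  rw [hκ]
  ring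

section adds
variable {L : Type*} [Field L] {p : ℕ} [Fact p.Prime] [CharP L p]

lemma Xmul_add_left (s : ℕ) (l n N v : L) (x y z : L × L) :
    Xmul (p ^ s) l n N v (x + y) z = Xmul (p ^ s) l n N v x z + Xmul (p ^ s) l n N v y z := by
  unfold Xmul Xh
  have h1 : (x.1 + y.1) ^ p ^ s = x.1 ^ p ^ s + y.1 ^ p ^ s := by rw [add_pow_char_pow]
  have h2 : (x.2 + y.2) ^ p ^ s = x.2 ^ p ^ s + y.2 ^ p ^ s := by rw [add_pow_char_pow]
  simp only [Prod.fst_add, Prod.snd_add, Prod.mk_add_mk, Prod.mk.injEq]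
  constructor
  · rw [h1, h2]; ring
  · ring

lemma Xmul_add_right (s : ℕ) (l n N v : L) (x y z : L × L) :
    Xmul (p ^ s) l n N v x (y + z) = Xmul (p ^ s) l n N v x y + Xmul (p ^ s) l n N v x z := by
  unfold Xmul Xh
  have h1 : (y.1 + z.1) ^ p ^ s = y.1 ^ p ^ s + z.1 ^ p ^ s := by rw [add_pow_char_pow]
  have h2 : (y.2 + z.2) ^ p ^ s = y.2 ^ p ^ s + z.2 ^ p ^ s := by rw [add_pow_char_pow]
  simp only [Prod.fst_add, Prod.snd_add, Prod.mk_add_mk, Prod.mk.injEq]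
  constructor
  · rw [h1, h2]; ring
  · ring

end adds

/-- antidiagonal additive equivalence -/
def antiEquiv {L : Type*} [Field L] (r u : L) (hr : r ≠ 0) (hu : u ≠ 0) :
    (L × L) ≃+ (L × L) where
  toFun y := (r * y.2, u * y.1)
  invFun y := (u⁻¹ * y.2, r⁻¹ * y.1)
  left_inv y := by
    ext <;> simp <;> field_simp
  right_inv y := by
    ext <;> simp <;> field_simp
  map_add' x y := by
    simp only [Prod.fst_add, Prod.snd_add, Prod.mk_add_mk, Prod.mk.injEq]
    constructor <;> ring

/-- shear additive equivalence -/
def shearEquiv {L : Type*} [Field L] (κ : L) : (L × L) ≃+ (L × L) where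
  toFun y := (y.1 + κ * y.2, y.2)
  invFun y := (y.1 - κ * y.2, y.2)
  left_inv y := by ext <;> simp
  right_inv y := by ext <;> simp
  map_add' x y := by
    simp only [Prod.fst_add, Prod.snd_add, Prod.mk_add_mk, Prod.mk.injEq]
    exact ⟨by ring, trivial⟩

lemma isotopic_of {L : Type*} [Field L] (star : L × L → L × L → L × L)
    (B : (L × L) ≃+ (L × L))
    (h1 : ∀ x y z, star (x + y) z = star x z + star y z)
    (h2 : ∀ x y z, star x (y + z) = star x y + star x z)
    (hnzd : NoZeroDivMul star)
    (hcomm : ∀ x y, star x (B y) = star y (B x)) :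
    IsotopicToCommutative star := by
  refine ⟨fun x y => star x (B y), AddEquiv.refl _, B, AddEquiv.refl _, ?_, ?_, ?_, ?_, ?_⟩
  · intro x y z
    show star (x + y) (B z) = star x (B z) + star y (B z)
    exact h1 x y (B z)
  · intro x y z
    show star x (B (y + z)) = star x (B y) + star x (B z)
    rw [map_add]
    exact h2 x (B y) (B z)
  · intro x y h
    rcases hnzd _ _ h with h' | h'
    · exact Or.inl h'
    · exact Or.inr (by simpa using B.injective (h'.trans (map_zero B).symm))
  · intro x y
    exact hcomm x y
  · intro x y; rfl

end Aux

/-- Corollary 7.11. -/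
theorem B_family_commutative_cases
    (p m s : ℕ) (hp : p.Prime) (hodd : Odd p) (hs : 0 < s) (hsm : s < m)
    (L : Type*) [Field L] [Fintype L] (hcard : Fintype.card L = p ^ m) :
    (∀ n : L, (¬ ∃ t : L, t ^ 2 = n) →
      (Even (m / Nat.gcd s m) ∨ Even (s / Nat.gcd s m)) →
      BpolyCond (p ^ s) n (n ^ ((p ^ s - 1) / 2)) →
      NoZeroDivMul (Xmul (p ^ s) ((n ^ ((p ^ s - 1) / 2))⁻¹) n (n ^ ((p ^ s - 1) / 2)) 1) ∧
      IsotopicToCommutative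
        (Xmul (p ^ s) ((n ^ ((p ^ s - 1) / 2))⁻¹) n (n ^ ((p ^ s - 1) / 2)) 1)) ∧
    (∀ n : L, (¬ ∃ t : L, t ^ 2 = n) →
      Odd (s / Nat.gcd s m) →
      BpolyCond (p ^ s) n (-(n ^ ((p ^ s - 1) / 2))) →
      NoZeroDivMul (Xmul (p ^ s) (-(n ^ ((p ^ s - 1) / 2))⁻¹) n (-(n ^ ((p ^ s - 1) / 2))) 1) ∧
      IsotopicToCommutative
        (Xmul (p ^ s) (-(n ^ ((p ^ s - 1) / 2))⁻¹) n (-(n ^ ((p ^ s - 1) / 2))) 1)) ∧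
    (∀ v : L, v ≠ 0 →
      Odd (m / Nat.gcd s m) →
      BpolyCond (p ^ s) (v ^ 2) (v ^ (p ^ s - 1)) →
      NoZeroDivMul (Xmul (p ^ s) 1 (v ^ 2) (v ^ (p ^ s - 1)) 1) ∧
      IsotopicToCommutative (Xmul (p ^ s) 1 (v ^ 2) (v ^ (p ^ s - 1)) 1)) ∧
    (∀ n : L, n ≠ 0 →
      Odd (m / Nat.gcd s m) →
      BpolyCond (p ^ s) n (n ^ (p ^ s - 1)) →
      NoZeroDivMul (Xmul (p ^ s) 1 n (n ^ (p ^ s - 1)) 1) ∧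
      IsotopicToCommutative (Xmul (p ^ s) 1 n (n ^ (p ^ s - 1)) 1)) := by
  haveI : Fact p.Prime := ⟨hp⟩
  haveI : CharP L p := charP_of_card' hp (by omega) hcard
  have hσodd : Odd (p ^ s) := hodd.pow
  have hσodd' : (p ^ s) % 2 = 1 := Nat.odd_iff.mp hσodd
  have hσ1 : 1 ≤ p ^ s := Nat.one_le_pow _ _ hp.pos
  have hh2 : (p ^ s - 1) / 2 + (p ^ s - 1) / 2 + 1 = p ^ s := by omega
  have hc2 : ringChar L ≠ 2 := by
    have h' : ringChar L = p := ringChar.eq L p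
    have := Nat.odd_iff.mp hodd
    omega
  have hd_pos : 0 < Nat.gcd s m := Nat.gcd_pos_of_pos_left m hs
  have hpd_odd : (p ^ Nat.gcd s m) % 2 = 1 := Nat.odd_iff.mp (hodd.pow)
  have hMT := key_nat (p := p) (s := s) (m := m) hp
  set M := ∑ i ∈ Finset.range (m / Nat.gcd s m), (p ^ Nat.gcd s m) ^ i with hMdef
  set T := ∑ i ∈ Finset.range (s / Nat.gcd s m), (p ^ Nat.gcd s m) ^ i with hTdef
  have hparM : M % 2 = (m / Nat.gcd s m) % 2 := geom_parity' hpd_odd _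
  have hparT : T % 2 = (s / Nat.gcd s m) % 2 := geom_parity' hpd_odd _
  have hcop : Nat.Coprime (s / Nat.gcd s m) (m / Nat.gcd s m) :=
    Nat.coprime_div_gcd_div_gcd hd_pos
  have hqodd : (p ^ m) % 2 = 1 := Nat.odd_iff.mp (hodd.pow)
  have hcard2 : Fintype.card L / 2 = (p ^ m - 1) / 2 := by rw [hcard]; omega
  have hnsq : ∀ n : L, (¬ ∃ t : L, t ^ 2 = n) → n ^ ((p ^ m - 1) / 2) = -1 := by
    intro n hns
    have hn0 : n ≠ 0 := fun h => hns ⟨0, by rw [h]; ring⟩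
    have hns' : ¬ IsSquare n := by
      rintro ⟨t, rfl⟩; exact hns ⟨t, sq t⟩
    have hres := (FiniteField.pow_dichotomy hc2 hn0).resolve_left
      (fun h => hns' ((FiniteField.isSquare_iff hc2 hn0).mpr h))
    rwa [hcard2] at hres
  have hhalf : ((p ^ s - 1) / 2) * M = ((p ^ m - 1) / 2) * T := by
    have e1 : 2 * ((p ^ s - 1) / 2) = p ^ s - 1 := by omega
    have e2 : 2 * ((p ^ m - 1) / 2) = p ^ m - 1 := by omega
    have h1 : 2 * (((p ^ s - 1) / 2) * M) = 2 * (((p ^ m - 1) / 2) * T) := by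
      calc 2 * (((p ^ s - 1) / 2) * M) = (2 * ((p ^ s - 1) / 2)) * M := by ring
      _ = (p ^ s - 1) * M := by rw [e1]
      _ = (p ^ m - 1) * T := hMT
      _ = (2 * ((p ^ m - 1) / 2)) * T := by rw [e2]
      _ = 2 * (((p ^ m - 1) / 2) * T) := by ring
    omega
  have hOddM_of : (m / Nat.gcd s m) % 2 = 1 → Odd M := by
    intro h; exact Nat.odd_iff.mpr (by omega)
  have hntb : ¬ (Even (s / Nat.gcd s m) ∧ Even (m / Nat.gcd s m)) := by
    rintro ⟨h1, h2⟩
    have hd2 : (2 : ℕ) ∣ Nat.gcd (s / Nat.gcd s m) (m / Nat.gcd s m) :=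
      Nat.dvd_gcd h1.two_dvd h2.two_dvd
    rw [Nat.Coprime] at hcop
    rw [hcop] at hd2
    omega
  refine ⟨?_, ?_, ?_, ?_⟩
  · -- Case 1
    intro n hns hpar hbp
    have hn0 : n ≠ 0 := fun h => hns ⟨0, by rw [h]; ring⟩
    have hNne : n ^ ((p ^ s - 1) / 2) ≠ 0 := pow_ne_zero _ hn0
    have hlne : (n ^ ((p ^ s - 1) / 2))⁻¹ ≠ 0 := inv_ne_zero hNne
    have hK : n ^ ((p ^ s - 1) / 2) * n ^ ((p ^ s - 1) / 2) * n = n ^ p ^ s := by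
      rw [← pow_add, ← pow_succ, hh2]
    have hXM : (n ^ ((p ^ s - 1) / 2)) ^ M = (-1 : L) ^ T := by
      rw [← pow_mul, hhalf, pow_mul, hnsq n hns]
    have hval : (-(n ^ ((p ^ s - 1) / 2))⁻¹) ^ M = -1 := by
      rw [neg_pow, inv_pow, hXM]
      rcases hpar with hev | hev
      · have hevM : Even M := Nat.even_iff.mpr (by rw [hparM]; exact Nat.even_iff.mp hev)
        have hoddT : Odd T := by
          have h' : ¬ Even (s / Nat.gcd s m) := fun h' => hntb ⟨h', hev⟩
          rw [Nat.even_iff] at h'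
          exact Nat.odd_iff.mpr (by rw [hparT]; omega)
        rw [hevM.neg_one_pow, hoddT.neg_one_pow, one_mul, inv_neg, inv_one]
      · have hoddM : Odd M := by
          have h' : ¬ Even (m / Nat.gcd s m) := fun h' => hntb ⟨hev, h'⟩
          rw [Nat.even_iff] at h'
          exact Nat.odd_iff.mpr (by rw [hparM]; omega)
        have hevT : Even T := Nat.even_iff.mpr (by rw [hparT]; exact Nat.even_iff.mp hev)
        rw [hoddM.neg_one_pow, hevT.neg_one_pow, inv_one, mul_one]
    have hA : ∀ e : L, e ^ p ^ s = -((n ^ ((p ^ s - 1) / 2))⁻¹) * e → e = 0 :=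
      eigen_zero hp hcard _ (by rw [hval]; exact neg_one_ne_one' hp hodd)
    have hnzd := core_nzd hodd hs hsm hcard ((n ^ ((p ^ s - 1) / 2))⁻¹) n
      (n ^ ((p ^ s - 1) / 2)) hn0 hNne hbp hA
    refine ⟨hnzd, ?_⟩
    have E1 : n * n ^ ((p ^ s - 1) / 2) * (n⁻¹ : L) ^ p ^ s
        = (n ^ ((p ^ s - 1) / 2))⁻¹ * n * n⁻¹ := by
      rw [inv_pow]
      field_simp
      linear_combination hK
    have E2 : (-1 : L) ^ p ^ s = -((n ^ ((p ^ s - 1) / 2))⁻¹ * n * n ^ ((p ^ s - 1) / 2) * n⁻¹) := by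
      rw [Odd.neg_one_pow hσodd]
      field_simp
    have E3 : (n ^ ((p ^ s - 1) / 2))⁻¹ * (-1)
        = -(n * n ^ ((p ^ s - 1) / 2) * (n⁻¹ : L) ^ p ^ s) := by
      rw [inv_pow]
      field_simp
      linear_combination hK
    have E4 : n * (-1 : L) ^ p ^ s = (n ^ ((p ^ s - 1) / 2))⁻¹ * n * n ^ ((p ^ s - 1) / 2) * (-1) := by
      rw [Odd.neg_one_pow hσodd]
      field_simp
    refine isotopic_of _ (antiEquiv (-1) n⁻¹ (neg_ne_zero.mpr one_ne_zero) (inv_ne_zero hn0))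
      (fun x y z => Xmul_add_left s _ _ _ _ x y z)
      (fun x y z => Xmul_add_right s _ _ _ _ x y z) hnzd ?_
    intro x y
    show Xmul (p ^ s) ((n ^ ((p ^ s - 1) / 2))⁻¹) n (n ^ ((p ^ s - 1) / 2)) 1 x
        (-1 * y.2, n⁻¹ * y.1)
      = Xmul (p ^ s) ((n ^ ((p ^ s - 1) / 2))⁻¹) n (n ^ ((p ^ s - 1) / 2)) 1 y
        (-1 * x.2, n⁻¹ * x.1)
    unfold Xmul
    simp only [Prod.mk.injEq]
    exact ⟨anti_identity (p ^ s) _ n _ n⁻¹ (-1) x.1 x.2 y.1 y.2 E1 E2 E3 E4, by ring⟩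
  · -- Case 2
    intro n hns hpar hbp
    have hn0 : n ≠ 0 := fun h => hns ⟨0, by rw [h]; ring⟩
    have hNne' : n ^ ((p ^ s - 1) / 2) ≠ 0 := pow_ne_zero _ hn0
    have hNne : -(n ^ ((p ^ s - 1) / 2)) ≠ 0 := neg_ne_zero.mpr hNne'
    have hK : n ^ ((p ^ s - 1) / 2) * n ^ ((p ^ s - 1) / 2) * n = n ^ p ^ s := by
      rw [← pow_add, ← pow_succ, hh2]
    have hXM : (n ^ ((p ^ s - 1) / 2)) ^ M = (-1 : L) ^ T := by
      rw [← pow_mul, hhalf, pow_mul, hnsq n hns]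
    have hoddT : Odd T := Nat.odd_iff.mpr (by rw [hparT]; exact Nat.odd_iff.mp hpar)
    have hval : (-(-(n ^ ((p ^ s - 1) / 2))⁻¹)) ^ M = -1 := by
      rw [neg_neg, inv_pow, hXM, hoddT.neg_one_pow, inv_neg, inv_one]
    have hA : ∀ e : L, e ^ p ^ s = -(-(n ^ ((p ^ s - 1) / 2))⁻¹) * e → e = 0 :=
      eigen_zero hp hcard _ (by rw [hval]; exact neg_one_ne_one' hp hodd)
    have hnzd := core_nzd hodd hs hsm hcard (-(n ^ ((p ^ s - 1) / 2))⁻¹) n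
      (-(n ^ ((p ^ s - 1) / 2))) hn0 hNne hbp hA
    refine ⟨hnzd, ?_⟩
    have E1 : n * -(n ^ ((p ^ s - 1) / 2)) * (n⁻¹ : L) ^ p ^ s
        = -(n ^ ((p ^ s - 1) / 2))⁻¹ * n * n⁻¹ := by
      rw [inv_pow]
      field_simp
      linear_combination -hK
    have E2 : (-1 : L) ^ p ^ s
        = -(-(n ^ ((p ^ s - 1) / 2))⁻¹ * n * -(n ^ ((p ^ s - 1) / 2)) * n⁻¹) := by
      rw [Odd.neg_one_pow hσodd]
      field_simp
    have E3 : -(n ^ ((p ^ s - 1) / 2))⁻¹ * (-1)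
        = -(n * -(n ^ ((p ^ s - 1) / 2)) * (n⁻¹ : L) ^ p ^ s) := by
      rw [inv_pow]
      field_simp
      linear_combination -hK
    have E4 : n * (-1 : L) ^ p ^ s
        = -(n ^ ((p ^ s - 1) / 2))⁻¹ * n * -(n ^ ((p ^ s - 1) / 2)) * (-1) := by
      rw [Odd.neg_one_pow hσodd]
      field_simp
    refine isotopic_of _ (antiEquiv (-1) n⁻¹ (neg_ne_zero.mpr one_ne_zero) (inv_ne_zero hn0))
      (fun x y z => Xmul_add_left s _ _ _ _ x y z)
      (fun x y z => Xmul_add_right s _ _ _ _ x y z) hnzd ?_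
    intro x y
    show Xmul (p ^ s) (-(n ^ ((p ^ s - 1) / 2))⁻¹) n (-(n ^ ((p ^ s - 1) / 2))) 1 x
        (-1 * y.2, n⁻¹ * y.1)
      = Xmul (p ^ s) (-(n ^ ((p ^ s - 1) / 2))⁻¹) n (-(n ^ ((p ^ s - 1) / 2))) 1 y
        (-1 * x.2, n⁻¹ * x.1)
    unfold Xmul
    simp only [Prod.mk.injEq]
    exact ⟨anti_identity (p ^ s) _ n _ n⁻¹ (-1) x.1 x.2 y.1 y.2 E1 E2 E3 E4, by ring⟩
  · -- Case 3
    intro v hv0 hpar hbp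
    have hn0 : (v ^ 2 : L) ≠ 0 := pow_ne_zero _ hv0
    have hNne : v ^ (p ^ s - 1) ≠ 0 := pow_ne_zero _ hv0
    have hK3 : v ^ (p ^ s - 1) * v = v ^ p ^ s := by
      rw [← pow_succ]
      congr 1
      omega
    have hoddM : Odd M := Nat.odd_iff.mpr (by rw [hparM]; exact Nat.odd_iff.mp hpar)
    have hval : (-(1 : L)) ^ M = -1 := by rw [hoddM.neg_pow, one_pow]
    have hA : ∀ e : L, e ^ p ^ s = -(1 : L) * e → e = 0 :=
      eigen_zero hp hcard _ (by rw [hval]; exact neg_one_ne_one' hp hodd)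
    have hnzd := core_nzd hodd hs hsm hcard (1 : L) (v ^ 2) (v ^ (p ^ s - 1)) hn0 hNne hbp hA
    refine ⟨hnzd, ?_⟩
    have E1 : v ^ 2 * v ^ (p ^ s - 1) * (v⁻¹ : L) ^ p ^ s = 1 * v ^ 2 * v⁻¹ := by
      rw [inv_pow]
      field_simp
      linear_combination hK3
    have E2 : (-v : L) ^ p ^ s = -(1 * v ^ 2 * v ^ (p ^ s - 1) * v⁻¹) := by
      rw [Odd.neg_pow hσodd]
      field_simp
      linear_combination hK3
    have E3 : 1 * (-v) = -(v ^ 2 * v ^ (p ^ s - 1) * (v⁻¹ : L) ^ p ^ s) := by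
      rw [inv_pow]
      field_simp
      linear_combination hK3
    have E4 : v ^ 2 * (-v : L) ^ p ^ s = 1 * v ^ 2 * v ^ (p ^ s - 1) * (-v) := by
      rw [Odd.neg_pow hσodd]
      field_simp
      linear_combination hK3
    refine isotopic_of _ (antiEquiv (-v) v⁻¹ (neg_ne_zero.mpr hv0) (inv_ne_zero hv0))
      (fun x y z => Xmul_add_left s _ _ _ _ x y z)
      (fun x y z => Xmul_add_right s _ _ _ _ x y z) hnzd ?_
    intro x y
    show Xmul (p ^ s) 1 (v ^ 2) (v ^ (p ^ s - 1)) 1 x (-v * y.2, v⁻¹ * y.1)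
      = Xmul (p ^ s) 1 (v ^ 2) (v ^ (p ^ s - 1)) 1 y (-v * x.2, v⁻¹ * x.1)
    unfold Xmul
    simp only [Prod.mk.injEq]
    exact ⟨anti_identity (p ^ s) 1 (v ^ 2) _ v⁻¹ (-v) x.1 x.2 y.1 y.2 E1 E2 E3 E4, by ring⟩
  · -- Case 4
    intro n hn0 hpar hbp
    have hNne : n ^ (p ^ s - 1) ≠ 0 := pow_ne_zero _ hn0
    have hK4 : n ^ (p ^ s - 1) * n = n ^ p ^ s := by
      rw [← pow_succ]
      congr 1
      omega
    have hoddM : Odd M := Nat.odd_iff.mpr (by rw [hparM]; exact Nat.odd_iff.mp hpar)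
    have hval : (-(1 : L)) ^ M = -1 := by rw [hoddM.neg_pow, one_pow]
    have hA : ∀ e : L, e ^ p ^ s = -(1 : L) * e → e = 0 :=
      eigen_zero hp hcard _ (by rw [hval]; exact neg_one_ne_one' hp hodd)
    have hnzd := core_nzd hodd hs hsm hcard (1 : L) n (n ^ (p ^ s - 1)) hn0 hNne hbp hA
    refine ⟨hnzd, ?_⟩
    have h2c : (2 : L) ^ p ^ s = 2 := by
      have h' : ((1 : L) + 1) ^ p ^ s = 1 ^ p ^ s + 1 ^ p ^ s := by rw [add_pow_char_pow]
      rw [one_pow] at h'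
      calc (2 : L) ^ p ^ s = ((1 : L) + 1) ^ p ^ s := by norm_num
      _ = 1 + 1 := h'
      _ = 2 := by norm_num
    have hκσ : (-(2 * n) : L) ^ p ^ s = -(2 * (n * n ^ (p ^ s - 1))) := by
      rw [Odd.neg_pow hσodd, mul_pow, h2c]
      rw [mul_comm n (n ^ (p ^ s - 1)), hK4]
    refine isotopic_of _ (shearEquiv (-(2 * n)))
      (fun x y z => Xmul_add_left s _ _ _ _ x y z)
      (fun x y z => Xmul_add_right s _ _ _ _ x y z) hnzd ?_
    intro x y
    show Xmul (p ^ s) 1 n (n ^ (p ^ s - 1)) 1 x (y.1 + -(2 * n) * y.2, y.2)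
      = Xmul (p ^ s) 1 n (n ^ (p ^ s - 1)) 1 y (x.1 + -(2 * n) * x.2, x.2)
    unfold Xmul
    simp only [Prod.mk.injEq]
    exact ⟨shear_identity s n (n ^ (p ^ s - 1)) (-(2 * n)) x.1 x.2 y.1 y.2 hκσ rfl, by ring⟩
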